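/- Let X, Y be Banach spaces and T : Y → X a bounded linear operator which is not compact. Then there exists a linear map L : ℓ∞(ℕ) → (X → ℝ) which is injective and such that for every μ ∈ ℓ∞(ℕ): L μ vanishes at 0, L μ is Lipschitz with best (smallest) Lipschitz constant equal to ‖μ‖∞, L μ is Gâteaux differentiable at 0, and if μ ≠ 0 then (L μ) ∘ T is not Fréchet differentiable at 0. -/

import Mathlib

open Filter Metric Topology

section Defs
variable {X Z : Type*} [NormedAddCommGroup X] [NormedSpace ℝ X]
  [NormedAddCommGroup Z] [NormedSpace ℝ Z]

/-- `A` is the Gâteaux derivative of `f` at `x`. -/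
def HasGateauxDerivAt (f : X → Z) (A : X →L[ℝ] Z) (x : X) : Prop :=
  ∀ h : X, Tendsto (fun t : ℝ => t⁻¹ • (f (x + t • h) - f x)) (𝓝[≠] (0 : ℝ)) (𝓝 (A h))

/-- `f` is Gâteaux differentiable at `x`. -/
def GateauxDifferentiableAt (f : X → Z) (x : X) : Prop :=
  ∃ A : X →L[ℝ] Z, HasGateauxDerivAt f A x
end Defs

lemma aux_sep {X : Type*} [PseudoMetricSpace X] {s : Set X}
    (hs : ¬ TotallyBounded s) :
    ∃ δ > 0, ∃ u : ℕ → X, (∀ n, u n ∈ s) ∧ ∀ n m, n ≠ m → δ ≤ dist (u n) (u m) := by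
  rw [Metric.totallyBounded_iff] at hs
  push_neg at hs
  obtain ⟨δ, hδ, hnet⟩ := hs
  have key : ∀ t : Set X, t.Finite → ∃ c, c ∈ s ∧ ∀ y ∈ t, δ ≤ dist c y := by
    intro t ht
    have h2 := hnet t ht
    rw [Set.not_subset] at h2
    obtain ⟨c, hcs, hc⟩ := h2
    refine ⟨c, hcs, fun y hy => ?_⟩
    by_contra hlt
    push_neg at hlt
    exact hc (Set.mem_biUnion hy (by simpa [Metric.mem_ball] using hlt))
  obtain ⟨u, hu⟩ := Set.seq_of_forall_finite_exists (P := fun c t => c ∈ s ∧ ∀ y ∈ t, δ ≤ dist c y)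
    key
  refine ⟨δ, hδ, u, fun n => (hu n).1, fun n m hnm => ?_⟩
  rcases lt_or_gt_of_ne hnm with h | h
  · rw [dist_comm]; exact (hu m).2 _ ⟨n, h, rfl⟩
  · exact (hu n).2 _ ⟨m, h, rfl⟩

set_option maxHeartbeats 4000000 in
set_option synthInstance.maxHeartbeats 400000 in
theorem lineability_of_bad_lipschitz_functions
    {X Y : Type*} [NormedAddCommGroup X] [NormedSpace ℝ X] [CompleteSpace X]
    [NormedAddCommGroup Y] [NormedSpace ℝ Y] [CompleteSpace Y]
    (T : Y →L[ℝ] X) (hT : ¬ IsCompact (closure (⇑T '' closedBall 0 1))) :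
    ∃ L : lp (fun _ : ℕ => ℝ) (⊤ : ENNReal) →ₗ[ℝ] (X → ℝ),
      Function.Injective L ∧
      ∀ μ : lp (fun _ : ℕ => ℝ) (⊤ : ENNReal),
        L μ 0 = 0 ∧
        LipschitzWith ‖μ‖₊ (L μ) ∧
        (∀ K : NNReal, LipschitzWith K (L μ) → ‖μ‖₊ ≤ K) ∧
        GateauxDifferentiableAt (L μ) 0 ∧
        (μ ≠ 0 → ¬ DifferentiableAt ℝ (L μ ∘ T) 0) := by
  classical
  -- Step 1: a separated sequence in the image of the unit ball
  have hstb : ¬ TotallyBounded (⇑T '' closedBall 0 1) := by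
    intro htb
    exact hT (TotallyBounded.isCompact_of_isClosed htb.closure isClosed_closure)
  obtain ⟨δ, hδ, u, hus, husep⟩ := aux_sep hstb
  -- Step 2: refine to get a lower bound on norms
  obtain ⟨z, y, hy1, hTy, hsep, hlb⟩ : ∃ (z : ℕ → X) (y : ℕ → Y),
      (∀ n, ‖y n‖ ≤ 1) ∧ (∀ n, T (y n) = z n) ∧
      (∀ n m, n ≠ m → δ ≤ dist (z n) (z m)) ∧ (∀ n, δ / 2 ≤ ‖z n‖) := by
    have hsmall : {n : ℕ | ‖u n‖ < δ / 2}.Subsingleton := by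
      intro a ha b hb
      by_contra hab
      have h1 := husep a b hab
      have h2 : dist (u a) (u b) ≤ ‖u a‖ + ‖u b‖ := dist_le_norm_add_norm _ _
      simp only [Set.mem_setOf_eq] at ha hb
      linarith
    have hSc : {n : ℕ | δ / 2 ≤ ‖u n‖}ᶜ.Finite := by
      refine Set.Subsingleton.finite (fun a ha b hb => hsmall ?_ ?_) <;>
      · simp only [Set.mem_compl_iff, Set.mem_setOf_eq, not_le] at ha hb
        simp only [Set.mem_setOf_eq]
        first | exact ha | exact hb
    have hS : {n : ℕ | δ / 2 ≤ ‖u n‖}.Infinite := by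
      have := hSc.infinite_compl
      rwa [compl_compl] at this
    let emb := hS.natEmbedding
    have hinj : Function.Injective (fun n => (emb n : ℕ)) :=
      fun a b h => emb.injective (Subtype.ext h)
    have hmem : ∀ n, ∃ w : Y, ‖w‖ ≤ 1 ∧ T w = u (emb n) := by
      intro n
      obtain ⟨w, hw, hTw⟩ := hus (emb n)
      exact ⟨w, by simpa [mem_closedBall, dist_zero_right] using hw, hTw⟩
    choose y hy1 hTy using hmem
    refine ⟨fun n => u (emb n), y, hy1, hTy, fun n m hnm => husep _ _ ?_, fun n => (emb n).2⟩
    exact fun h => hnm (hinj h)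
  clear hus husep hstb hT
  -- Step 3: constants
  set M : ℝ := max ‖T‖ 1 with hM
  have hM1 : (1 : ℝ) ≤ M := le_max_right _ _
  have hMpos : (0 : ℝ) < M := lt_of_lt_of_le one_pos hM1
  have hzM : ∀ n, ‖z n‖ ≤ M := by
    intro n
    rw [← hTy n]
    calc ‖T (y n)‖ ≤ ‖T‖ * ‖y n‖ := T.le_opNorm _
    _ ≤ ‖T‖ * 1 := by
        refine mul_le_mul_of_nonneg_left (hy1 n) (norm_nonneg _)
    _ ≤ M := by rw [mul_one]; exact le_max_left _ _
  have hδ2M : δ ≤ 2 * M := by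
    have h1 := hsep 0 1 (by norm_num)
    have h2 : dist (z 0) (z 1) ≤ ‖z 0‖ + ‖z 1‖ := dist_le_norm_add_norm _ _
    have := hzM 0; have := hzM 1
    linarith
  set ε : ℝ := δ / 16 with hε
  have hεpos : 0 < ε := by positivity
  set β : ℝ := δ / (8 * M) with hβ
  have hβpos : 0 < β := by positivity
  have hβlt : β < 1 := by
    rw [hβ, div_lt_one (by positivity)]
    linarith
  set t : ℕ → ℝ := fun n => β ^ n with htdef
  have htpos : ∀ n, 0 < t n := fun n => pow_pos hβpos n
  have htmono : ∀ n m, n < m → t m ≤ β * t n := by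
    intro n m hnm
    have : t m ≤ t (n + 1) := pow_le_pow_of_le_one hβpos.le hβlt.le hnm
    calc t m ≤ β ^ (n + 1) := this
    _ = β * t n := by rw [pow_succ]; ring
  set r : ℕ → ℝ := fun n => ε * t n with hrdef
  have hrpos : ∀ n, 0 < r n := fun n => mul_pos hεpos (htpos n)
  set p : ℕ → X := fun n => t n • z n with hpdef
  -- separation of the bump centers
  have hsepp : ∀ n m, n ≠ m → 2 * r n + 2 * r m ≤ dist (p n) (p m) := by
    have key : ∀ n m, n < m → 2 * r n + 2 * r m ≤ dist (p n) (p m) := by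
      intro n m hnm
      have h1 : dist (p n) (p m) ≥ ‖p n‖ - ‖p m‖ := by
        have := norm_sub_norm_le (p n) (p m)
        rw [← dist_eq_norm] at this
        linarith
      have hpn : ‖p n‖ = t n * ‖z n‖ := by
        rw [hpdef]; simp [norm_smul, abs_of_pos (htpos n)]
      have hpm : ‖p m‖ = t m * ‖z m‖ := by
        rw [hpdef]; simp [norm_smul, abs_of_pos (htpos m)]
      have h2 : ‖p n‖ ≥ t n * (δ / 2) := by
        rw [hpn]; exact mul_le_mul_of_nonneg_left (hlb n) (htpos n).le
      have h3 : ‖p m‖ ≤ β * t n * M := by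
        rw [hpm]
        have := htmono n m hnm
        have := hzM m
        have := htpos m
        nlinarith
      have hβM : β * M = δ / 8 := by
        rw [hβ]; field_simp
      have h4 : β * t n * M ≤ t n * (δ / 8) := by nlinarith [htpos n]
      have h5 : t n * (δ / 2) - t n * (δ / 8) ≤ dist (p n) (p m) := by linarith
      have h6 : 2 * r n + 2 * r m ≤ 4 * (ε * t n) := by
        have htm : t m ≤ t n := by
          have := htmono n m hnm
          nlinarith [htpos n, hβlt, htpos m]
        rw [hrdef]
        simp only
        nlinarith [htpos m]
      have : 4 * (ε * t n) ≤ t n * (δ / 2) - t n * (δ / 8) := by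
        rw [hε]; nlinarith [htpos n]
      linarith
    intro n m hnm
    rcases lt_or_gt_of_ne hnm with h | h
    · exact key n m h
    · rw [dist_comm]; linarith [key m n h]
  -- bumps
  set bump : ℕ → X → ℝ := fun n x => max (r n - dist x (p n)) 0 with hbump
  have hbump_lip : ∀ n x x', |bump n x - bump n x'| ≤ dist x x' := by
    intro n x x'
    calc |bump n x - bump n x'| ≤ |(r n - dist x (p n)) - (r n - dist x' (p n))| :=
      abs_max_sub_max_le_abs _ _ _
    _ = |dist x' (p n) - dist x (p n)| := by ring_nf
    _ ≤ dist x' x := abs_dist_sub_le _ _ _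
    _ = dist x x' := dist_comm _ _
  have hbump_zero : ∀ n x, r n ≤ dist x (p n) → bump n x = 0 := by
    intro n x h; rw [hbump]; simp only; rw [max_eq_right]; linarith
  have hbump_val : ∀ n x, dist x (p n) ≤ r n → bump n x = r n - dist x (p n) := by
    intro n x h; rw [hbump]; simp only; rw [max_eq_left]; linarith
  -- covering index
  set ind : X → ℕ := fun x => if h : ∃ n, dist x (p n) < r n then h.choose else 0 with hind
  have hind_spec : ∀ x, (∃ n, dist x (p n) < r n) → dist x (p (ind x)) < r (ind x) := by
    intro x hx
    rw [hind]; simp only [dif_pos hx]; exact hx.choose_spec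
  have huniq : ∀ {n m : ℕ} {x : X}, dist x (p n) < r n → dist x (p m) < r m → n = m := by
    intro n m x h1 h2
    by_contra hnm
    have hs1 := hsepp n m hnm
    have hs2 := dist_triangle (p n) x (p m)
    rw [dist_comm (p n) x] at hs2
    nlinarith [hrpos n, hrpos m]
  have hind_eq : ∀ {x : X} {n : ℕ}, dist x (p n) < r n → ind x = n := by
    intro x n h
    exact huniq (hind_spec x ⟨n, h⟩) h
  have hncov : ∀ x : X, ¬ dist x (p (ind x)) < r (ind x) → ∀ n, r n ≤ dist x (p n) := by
    intro x hx n
    by_contra h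
    push_neg at h
    exact hx (hind_spec x ⟨n, h⟩)
  -- coefficient index
  set idx : ℕ → ℕ := fun n => (Nat.pairEquiv.symm n).1 with hidx
  set en : ℕ → ℕ → ℕ := fun k j => Nat.pairEquiv (k, j) with hen
  have hidx_en : ∀ k j, idx (en k j) = k := by
    intro k j; rw [hidx, hen]; simp
  -- the map
  set F : lp (fun _ : ℕ => ℝ) (⊤ : ENNReal) → X → ℝ :=
    fun μ x => μ (idx (ind x)) * bump (ind x) x with hF
  have hFcenter : ∀ μ n, F μ (p n) = μ (idx n) * r n := by
    intro μ n
    have h1 : dist (p n) (p n) < r n := by rw [dist_self]; exact hrpos n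
    have h2 : ind (p n) = n := hind_eq h1
    rw [hF]; simp only [h2]
    rw [hbump_val n _ (by rw [dist_self]; exact (hrpos n).le), dist_self, sub_zero]
  have hF0 : ∀ x : X, (∀ n, r n ≤ dist x (p n)) → ∀ μ, F μ x = 0 := by
    intro x hx μ
    rw [hF]; simp only
    rw [hbump_zero _ _ (hx _), mul_zero]
  have hzero_ncov : ∀ n, r n ≤ dist (0 : X) (p n) := by
    intro n
    have h1 : dist (0 : X) (p n) = t n * ‖z n‖ := by
      rw [dist_comm, dist_zero_right, hpdef]
      simp [norm_smul, abs_of_pos (htpos n)]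
    rw [h1, hrdef]
    have := hlb n
    have := htpos n
    rw [hε]
    nlinarith
  -- the master Lipschitz estimate
  have hcoef : ∀ (μ : lp (fun _ : ℕ => ℝ) (⊤ : ENNReal)) (j : ℕ), |μ j| ≤ ‖μ‖ := by
    intro μ j
    simpa [Real.norm_eq_abs] using lp.norm_apply_le_norm ENNReal.top_ne_zero μ j
  have hnorm_nonneg : ∀ μ : lp (fun _ : ℕ => ℝ) (⊤ : ENNReal), (0:ℝ) ≤ ‖μ‖ := fun μ => norm_nonneg μ
  have hlip : ∀ (μ : lp (fun _ : ℕ => ℝ) (⊤ : ENNReal)) (x x' : X),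
      |F μ x - F μ x'| ≤ ‖μ‖ * dist x x' := by
    intro μ x x'
    by_cases hx : dist x (p (ind x)) < r (ind x) <;>
      by_cases hx' : dist x' (p (ind x')) < r (ind x')
    · by_cases hnm : ind x = ind x'
      · rw [hF]; simp only [hnm]
        rw [← mul_sub, abs_mul]
        exact mul_le_mul (hcoef μ _) (hbump_lip _ _ _) (abs_nonneg _) (hnorm_nonneg μ)
      · have hb1 : bump (ind x) x = r (ind x) - dist x (p (ind x)) := hbump_val _ _ hx.le
        have hb2 : bump (ind x') x' = r (ind x') - dist x' (p (ind x')) := hbump_val _ _ hx'.le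
        have hsum : bump (ind x) x + bump (ind x') x' ≤ dist x x' := by
          have ht1 := dist_triangle (p (ind x)) x (p (ind x'))
          have ht2 := dist_triangle x x' (p (ind x'))
          have hs := hsepp _ _ hnm
          rw [dist_comm (p (ind x)) x] at ht1
          rw [hb1, hb2]
          have := hrpos (ind x); have := hrpos (ind x')
          nlinarith
        calc |F μ x - F μ x'| ≤ |F μ x| + |F μ x'| := abs_sub _ _
        _ ≤ ‖μ‖ * bump (ind x) x + ‖μ‖ * bump (ind x') x' := by
            rw [hF]; simp only [abs_mul]
            have e1 : |bump (ind x) x| = bump (ind x) x := abs_of_nonneg (le_max_right _ _)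
            have e2 : |bump (ind x') x'| = bump (ind x') x' := abs_of_nonneg (le_max_right _ _)
            rw [e1, e2]
            exact add_le_add
              (mul_le_mul_of_nonneg_right (hcoef μ _) (le_max_right _ _))
              (mul_le_mul_of_nonneg_right (hcoef μ _) (le_max_right _ _))
        _ = ‖μ‖ * (bump (ind x) x + bump (ind x') x') := by ring
        _ ≤ ‖μ‖ * dist x x' := by
            exact mul_le_mul_of_nonneg_left hsum (hnorm_nonneg μ)
    · have h0 : F μ x' = 0 := by
        rw [hF]; simp only
        rw [hbump_zero _ _ (not_lt.mp hx'), mul_zero]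
      have hge : r (ind x) ≤ dist x' (p (ind x)) := hncov x' hx' _
      have hb1 : bump (ind x) x = r (ind x) - dist x (p (ind x)) := hbump_val _ _ hx.le
      have hble : bump (ind x) x ≤ dist x x' := by
        rw [hb1]
        have := dist_triangle x' x (p (ind x))
        rw [dist_comm x' x] at this
        linarith
      rw [h0, sub_zero, hF]; simp only [abs_mul]
      calc |(μ : ∀ _ : ℕ, ℝ) (idx (ind x))| * |bump (ind x) x| ≤ ‖μ‖ * bump (ind x) x := by
            rw [abs_of_nonneg (le_max_right _ _ : (0:ℝ) ≤ bump (ind x) x)]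
            exact mul_le_mul_of_nonneg_right (hcoef μ _) (le_max_right _ _)
      _ ≤ ‖μ‖ * dist x x' := mul_le_mul_of_nonneg_left hble (hnorm_nonneg μ)
    · have h0 : F μ x = 0 := by
        rw [hF]; simp only
        rw [hbump_zero _ _ (not_lt.mp hx), mul_zero]
      have hge : r (ind x') ≤ dist x (p (ind x')) := hncov x hx _
      have hb1 : bump (ind x') x' = r (ind x') - dist x' (p (ind x')) := hbump_val _ _ hx'.le
      have hble : bump (ind x') x' ≤ dist x x' := by
        rw [hb1]
        have := dist_triangle x x' (p (ind x'))
        linarith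
      rw [h0, zero_sub, abs_neg, hF]; simp only [abs_mul]
      calc |(μ : ∀ _ : ℕ, ℝ) (idx (ind x'))| * |bump (ind x') x'| ≤ ‖μ‖ * bump (ind x') x' := by
            rw [abs_of_nonneg (le_max_right _ _ : (0:ℝ) ≤ bump (ind x') x')]
            exact mul_le_mul_of_nonneg_right (hcoef μ _) (le_max_right _ _)
      _ ≤ ‖μ‖ * dist x x' := mul_le_mul_of_nonneg_left hble (hnorm_nonneg μ)
    · have h0 : F μ x = 0 := by
        rw [hF]; simp only
        rw [hbump_zero _ _ (not_lt.mp hx), mul_zero]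
      have h0' : F μ x' = 0 := by
        rw [hF]; simp only
        rw [hbump_zero _ _ (not_lt.mp hx'), mul_zero]
      rw [h0, h0', sub_zero, abs_zero]
      positivity
  -- near zero, lines through the origin avoid all bumps
  have hline : ∀ w : X, ∃ τ : ℝ, 0 < τ ∧ ∀ s : ℝ, |s| < τ → ∀ n, r n ≤ dist (s • w) (p n) := by
    intro w
    by_cases hw : w = 0
    · refine ⟨1, one_pos, fun s _ n => ?_⟩
      rw [hw, smul_zero]
      exact hzero_ncov n
    · have hwpos : 0 < ‖w‖ := norm_pos_iff.mpr hw
      set S : Set ℕ := {n | ∃ s : ℝ, dist (s • w) (p n) < r n} with hSdef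
      have hdist_lam : ∀ (n : ℕ) (s : ℝ), dist (s • w) (p n) < r n →
          ‖(s / t n) • w - z n‖ < ε := by
        intro n s hs
        have h1 : ‖s • w - t n • z n‖ < ε * t n := by
          rw [← dist_eq_norm]; exact hs
        have h2a : t n • ((s / t n) • w - z n) = s • w - t n • z n := by
          rw [smul_sub, smul_smul, mul_div_cancel₀ _ (htpos n).ne']
        have h2 : ‖(s / t n) • w - z n‖ * t n = ‖s • w - t n • z n‖ := by
          rw [← h2a, norm_smul, Real.norm_eq_abs, abs_of_pos (htpos n), mul_comm]
        have h3 := htpos n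
        nlinarith [norm_nonneg ((s / t n) • w - z n)]
      have hex : ∀ n, n ∈ S → ∃ l : ℝ, ‖l • w - z n‖ < ε := by
        intro n hn
        obtain ⟨s, hs⟩ := hn
        exact ⟨s / t n, hdist_lam n s hs⟩
      choose lam hlam using hex
      have hlam_bd : ∀ (n : ℕ) (hn : n ∈ S), |lam n hn * ‖w‖| ≤ 2 * M := by
        intro n hn
        have h1 := hlam n hn
        have h2 : ‖lam n hn • w‖ - ‖z n‖ ≤ ‖lam n hn • w - z n‖ := norm_sub_norm_le _ _
        have h3 : ‖lam n hn • w‖ = |lam n hn| * ‖w‖ := by rw [norm_smul, Real.norm_eq_abs]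
        have h4 := hzM n
        have h5 : |lam n hn * ‖w‖| = |lam n hn| * ‖w‖ := by
          rw [abs_mul, abs_of_nonneg (norm_nonneg w)]
        rw [hε] at h1
        nlinarith [hδ2M, hMpos]
      have hlam_sep : ∀ (n m : ℕ) (hn : n ∈ S) (hm : m ∈ S), n ≠ m →
          δ / 2 ≤ |lam n hn * ‖w‖ - lam m hm * ‖w‖| := by
        intro n m hn hm hnm
        have h1 := hlam n hn
        have h2 := hlam m hm
        have h3 := hsep n m hnm
        rw [dist_eq_norm] at h3
        have h4 : ‖z n - z m‖ ≤ ‖z n - lam n hn • w‖ + ‖lam n hn • w - lam m hm • w‖ +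
            ‖lam m hm • w - z m‖ := by
          have heq : z n - z m = (z n - lam n hn • w) + ((lam n hn • w - lam m hm • w) +
              (lam m hm • w - z m)) := by abel
          rw [heq]
          have hb := norm_add_le (lam n hn • w - lam m hm • w) (lam m hm • w - z m)
          have ha := norm_add_le (z n - lam n hn • w)
            ((lam n hn • w - lam m hm • w) + (lam m hm • w - z m))
          linarith
        have h5 : ‖z n - lam n hn • w‖ = ‖lam n hn • w - z n‖ := norm_sub_rev _ _
        have h6 : ‖lam n hn • w - lam m hm • w‖ = |lam n hn * ‖w‖ - lam m hm * ‖w‖| := by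
          rw [← sub_smul, norm_smul, Real.norm_eq_abs,
            show |lam n hn - lam m hm| * ‖w‖ = |(lam n hn - lam m hm) * ‖w‖| from by
              rw [abs_mul, abs_of_nonneg (norm_nonneg w)], sub_mul]
        rw [hε] at h1 h2
        linarith
      have hSfin : S.Finite := by
        set G : ℕ → ℤ := fun n => if hn : n ∈ S then ⌊lam n hn * ‖w‖ / (δ / 2)⌋ else 0 with hG
        have hinjOn : Set.InjOn G S := by
          intro n hn m hm hGnm
          by_contra hnm
          rw [hG] at hGnm
          simp only [dif_pos hn, dif_pos hm] at hGnm
          have h1 : |lam n hn * ‖w‖ / (δ / 2) - lam m hm * ‖w‖ / (δ / 2)| < 1 :=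
            Int.abs_sub_lt_one_of_floor_eq_floor hGnm
          have h2 : lam n hn * ‖w‖ / (δ / 2) - lam m hm * ‖w‖ / (δ / 2)
              = (lam n hn * ‖w‖ - lam m hm * ‖w‖) / (δ / 2) := by ring
          rw [h2, abs_div, abs_of_pos (by linarith : (0:ℝ) < δ / 2), div_lt_one
            (by linarith : (0:ℝ) < δ / 2)] at h1
          have h3 := hlam_sep n m hn hm hnm
          linarith
        have himg : G '' S ⊆ Set.Icc (⌊(-(2 * M)) / (δ / 2)⌋ : ℤ) ⌊2 * M / (δ / 2)⌋ := by
          rintro _ ⟨n, hn, rfl⟩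
          rw [hG]
          simp only [dif_pos hn]
          have hb := hlam_bd n hn
          rw [abs_le] at hb
          have hc : (0:ℝ) < δ / 2 := by linarith
          constructor
          · exact Int.floor_le_floor ((div_le_div_iff_of_pos_right hc).mpr (by linarith [hb.1]))
          · exact Int.floor_le_floor ((div_le_div_iff_of_pos_right hc).mpr (by linarith [hb.2]))
        exact Set.Finite.of_finite_image ((Set.finite_Icc _ _).subset himg) hinjOn
      rcases hSfin.toFinset.eq_empty_or_nonempty with hSe | hSne
      · refine ⟨1, one_pos, fun s _ n => ?_⟩
        by_contra hlt
        push_neg at hlt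
        have h1 : n ∈ S := ⟨s, hlt⟩
        have h2 : n ∈ hSfin.toFinset := hSfin.mem_toFinset.mpr h1
        simp [hSe] at h2
      · set τ : ℝ := (hSfin.toFinset.inf' hSne t) * (δ / 4) / ‖w‖ with hτdef
        have hinfpos : 0 < hSfin.toFinset.inf' hSne t := by
          rw [Finset.lt_inf'_iff]
          exact fun n _ => htpos n
        refine ⟨τ, by positivity, fun s hs n => ?_⟩
        by_contra hlt
        push_neg at hlt
        have hnS : n ∈ S := ⟨s, hlt⟩
        have hmem : n ∈ hSfin.toFinset := hSfin.mem_toFinset.mpr hnS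
        have hinf_le : hSfin.toFinset.inf' hSne t ≤ t n := Finset.inf'_le _ hmem
        have h1 : ‖t n • z n‖ - ‖s • w‖ ≤ ‖s • w - t n • z n‖ := by
          rw [norm_sub_rev]; exact norm_sub_norm_le _ _
        have h2 : ‖s • w - t n • z n‖ < ε * t n := by rw [← dist_eq_norm]; exact hlt
        have h3 : ‖t n • z n‖ = t n * ‖z n‖ := by
          rw [norm_smul, Real.norm_eq_abs, abs_of_pos (htpos n)]
        have h4 : ‖s • w‖ = |s| * ‖w‖ := by rw [norm_smul, Real.norm_eq_abs]
        have h5 : t n * (δ / 4) ≤ |s| * ‖w‖ := by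
          rw [hε] at h2
          have := hlb n
          have := htpos n
          nlinarith
        have h6 : |s| * ‖w‖ < τ * ‖w‖ := mul_lt_mul_of_pos_right hs hwpos
        rw [hτdef] at h6
        have h7 : (hSfin.toFinset.inf' hSne t) * (δ / 4) / ‖w‖ * ‖w‖ =
            (hSfin.toFinset.inf' hSne t) * (δ / 4) := by field_simp
        nlinarith
  -- assemble the linear map and verify the properties
  refine ⟨{ toFun := F
            map_add' := by
              intro μ ν
              funext x
              rw [hF]
              simp only [lp.coeFn_add, Pi.add_apply]
              ring
            map_smul' := by
              intro c μ
              funext x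
              simp only [hF]
              simp only [lp.coeFn_smul, Pi.smul_apply, smul_eq_mul, RingHom.id_apply]
              ring }, ?_, ?_⟩
  · -- injectivity
    intro μ ν hμν
    apply lp.ext
    funext k
    have h1 := congrFun hμν (p (en k 0))
    simp only [LinearMap.coe_mk, AddHom.coe_mk] at h1
    rw [hFcenter μ (en k 0), hFcenter ν (en k 0), hidx_en] at h1
    exact mul_right_cancel₀ (hrpos (en k 0)).ne' h1
  · intro μ
    refine ⟨?_, ?_, ?_, ?_, ?_⟩
    · -- vanishes at 0
      simp only [LinearMap.coe_mk, AddHom.coe_mk]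
      exact hF0 0 hzero_ncov μ
    · -- Lipschitz with constant ‖μ‖
      simp only [LinearMap.coe_mk, AddHom.coe_mk]
      apply LipschitzWith.of_dist_le_mul
      intro a b
      rw [Real.dist_eq, coe_nnnorm]
      exact hlip μ a b
    · -- best Lipschitz constant
      intro K hK
      simp only [LinearMap.coe_mk, AddHom.coe_mk] at hK
      rw [← NNReal.coe_le_coe, coe_nnnorm]
      refine lp.norm_le_of_forall_le K.coe_nonneg (fun k => ?_)
      have hz0 : ‖z 0‖ ≠ 0 := by
        have := hlb 0
        intro hc
        rw [hc] at this
        linarith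
      set n : ℕ := en k 0 with hn
      set u0 : X := ‖z 0‖⁻¹ • z 0 with hu0
      have hu0n : ‖u0‖ = 1 := by
        rw [hu0, norm_smul, norm_inv, norm_norm, inv_mul_cancel₀ hz0]
      set q : X := p n + r n • u0 with hq
      have hdq : dist (p n) q = r n := by
        rw [hq, dist_self_add_right, norm_smul, Real.norm_eq_abs, abs_of_pos (hrpos n), hu0n,
          mul_one]
      have hq_ncov : ∀ m, r m ≤ dist q (p m) := by
        intro m
        by_cases hm : m = n
        · rw [hm, dist_comm, hdq]
        · have h1 := hsepp n m (fun h => hm h.symm)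
          have h2 := dist_triangle (p n) q (p m)
          have := hrpos n
          have := hrpos m
          linarith [hdq]
      have hFq : F μ q = 0 := hF0 q hq_ncov μ
      have hFp : F μ (p n) = μ k * r n := by rw [hFcenter, hn, hidx_en]
      have hd := hK.dist_le_mul (p n) q
      rw [Real.dist_eq, hFp, hFq, sub_zero, hdq, abs_mul, abs_of_pos (hrpos n)] at hd
      have := hrpos n
      rw [Real.norm_eq_abs]
      nlinarith
    · -- Gâteaux differentiability at 0
      simp only [LinearMap.coe_mk, AddHom.coe_mk]
      refine ⟨0, fun h => ?_⟩
      obtain ⟨τ, hτ, hτ0⟩ := hline h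
      have hmem : ∀ᶠ s in 𝓝[≠] (0 : ℝ), |s| < τ := by
        apply eventually_nhdsWithin_of_eventually_nhds
        filter_upwards [Metric.ball_mem_nhds (0 : ℝ) hτ] with s hs
        simpa [Real.dist_eq] using hs
      have h0 : ((0 : X →L[ℝ] ℝ)) h = 0 := rfl
      rw [h0]
      refine Filter.Tendsto.congr' ?_ tendsto_const_nhds
      filter_upwards [hmem] with s hs
      rw [zero_add, hF0 _ (hτ0 s hs) μ, hF0 0 hzero_ncov μ]
      simp
    · -- non-Fréchet differentiability of the composition
      intro hμ hd
      simp only [LinearMap.coe_mk, AddHom.coe_mk] at hd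
      obtain ⟨k, hk⟩ : ∃ k, (μ : ∀ _ : ℕ, ℝ) k ≠ 0 := by
        by_contra hc
        push_neg at hc
        refine hμ (lp.ext (funext fun k => ?_))
        rw [hc k, lp.coeFn_zero, Pi.zero_apply]
      have hB := hd.hasFDerivAt
      set B := fderiv ℝ (F μ ∘ ⇑T) 0 with hBdef
      have hB0 : B = 0 := by
        ext w
        have hg : HasDerivAt (fun s : ℝ => s • w) w 0 := by
          have := (hasDerivAt_id (0 : ℝ)).smul_const w
          rwa [one_smul] at this
        have h1 : HasDerivAt (fun s : ℝ => (F μ ∘ ⇑T) (s • w)) (B w) 0 := by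
          have hB' : HasFDerivAt (F μ ∘ ⇑T) B ((fun s : ℝ => s • w) 0) := by
            simpa using hB
          exact hB'.comp_hasDerivAt 0 hg
        have h2 : HasDerivAt (fun s : ℝ => (F μ ∘ ⇑T) (s • w)) 0 0 := by
          obtain ⟨τ, hτ, hτ0⟩ := hline (T w)
          have hev : (fun s : ℝ => (F μ ∘ ⇑T) (s • w)) =ᶠ[𝓝 (0 : ℝ)] fun _ => 0 := by
            filter_upwards [Metric.ball_mem_nhds (0 : ℝ) hτ] with s hs
            have hs' : |s| < τ := by simpa [Real.dist_eq] using hs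
            show F μ (T (s • w)) = 0
            rw [map_smul]
            exact hF0 _ (hτ0 s hs') μ
          exact (hasDerivAt_const (0 : ℝ) (0 : ℝ)).congr_of_eventuallyEq hev
        have h3 := h2.unique h1
        rw [← h3]
        rfl
      rw [hB0] at hB
      rw [hasFDerivAt_iff_isLittleO_nhds_zero] at hB
      set v : ℕ → Y := fun j => t (en k j) • y (en k j) with hv
      have htend : Tendsto (fun j => t (en k j)) atTop (𝓝 0) := by
        have hinj : Function.Injective (en k) := by
          intro a b hab
          rw [hen] at hab
          have := Nat.pairEquiv.injective hab
          exact (Prod.mk.injEq _ _ _ _).mp this |>.2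
        have h1 : Tendsto (en k) atTop atTop := by
          rw [← Nat.cofinite_eq_atTop]
          exact hinj.tendsto_cofinite
        have h2 : Tendsto (fun n : ℕ => β ^ n) atTop (𝓝 0) :=
          tendsto_pow_atTop_nhds_zero_of_lt_one hβpos.le hβlt
        exact h2.comp h1
      have hvnorm : ∀ j, ‖v j‖ ≤ t (en k j) := by
        intro j
        rw [hv]
        simp only [norm_smul, Real.norm_eq_abs, abs_of_pos (htpos _)]
        nlinarith [hy1 (en k j), htpos (en k j)]
      have hvtend : Tendsto v atTop (𝓝 0) := by
        rw [tendsto_zero_iff_norm_tendsto_zero]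
        exact squeeze_zero (fun j => norm_nonneg _) hvnorm htend
      have hcomp := hB.comp_tendsto hvtend
      rw [Asymptotics.isLittleO_iff] at hcomp
      have hkpos : (0 : ℝ) < |(μ : ∀ _ : ℕ, ℝ) k| := abs_pos.mpr hk
      have hc2 : (0 : ℝ) < |(μ : ∀ _ : ℕ, ℝ) k| * ε / 2 := by positivity
      obtain ⟨j, hj⟩ := (hcomp hc2).exists
      have hTv : T (v j) = p (en k j) := by
        rw [hv]
        simp only [map_smul, hTy]
        rfl
      have hFv : F μ (T (v j)) = μ k * r (en k j) := by rw [hTv, hFcenter, hidx_en]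
      have hT0 : (F μ ∘ ⇑T) 0 = 0 := by
        show F μ (T 0) = 0
        rw [map_zero]
        exact hF0 0 hzero_ncov μ
      have hj' : ‖F μ (T (v j))‖ ≤ |(μ : ∀ _ : ℕ, ℝ) k| * ε / 2 * ‖v j‖ := by
        simp only [Function.comp_apply, ContinuousLinearMap.zero_apply, zero_add, map_zero,
          hF0 0 hzero_ncov μ, sub_zero] at hj
        exact hj
      rw [hFv, Real.norm_eq_abs, abs_mul] at hj'
      have hrn : |r (en k j)| = ε * t (en k j) := abs_of_pos (hrpos _)
      rw [hrn] at hj'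
      have hvj := hvnorm j
      have htj := htpos (en k j)
      nlinarith [norm_nonneg (v j)]
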